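/- Let A be the (possibly weighted, loops allowed) adjacency matrix of a finite simple connected graph G on n vertices. Let λ ∈ ℝ and u ∈ ℝⁿ be such that u has at least two entries of opposite signs and Au ≥ λu componentwise. Let ℓ' be the number of eigenvalues of A (counted with multiplicity) that are strictly greater than λ. Then u induces at most ℓ' positive weak nodal domains on G. -/

import Mathlib

open Matrix Finset

variable {n : ℕ}

def matGraph (A : Matrix (Fin n) (Fin n) ℝ) : SimpleGraph (Fin n) where
  Adj i j := i ≠ j ∧ (A i j ≠ 0 ∨ A j i ≠ 0)
  symm := ⟨fun _ _ h => ⟨h.1.symm, h.2.symm⟩⟩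
  loopless := ⟨fun _ h => h.1 rfl⟩

def IsPosWeakNodalDomain (G : SimpleGraph (Fin n)) (u : Fin n → ℝ)
    (S : Set (Fin n)) : Prop :=
  S ⊆ {i | 0 ≤ u i} ∧ (∃ i ∈ S, u i ≠ 0) ∧ (G.induce S).Connected ∧
    ∀ T : Set (Fin n), S ⊆ T → T ⊆ {i | 0 ≤ u i} → (G.induce T).Connected → T = S

section Aux

variable {G : SimpleGraph (Fin n)} {u : Fin n → ℝ} {S T : Set (Fin n)}

lemma domain_absorb (hS : IsPosWeakNodalDomain G u S)
    {i j : Fin n} (hi : i ∈ S) (hadj : G.Adj i j) (hj : 0 ≤ u j) : j ∈ S := by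
  obtain ⟨hsub, -, hconn, hmax⟩ := hS
  have hT : (G.induce (S ∪ {i, j})).Connected :=
    SimpleGraph.connected_induce_union hconn.preconnected
      (SimpleGraph.induce_pair_connected_of_adj hadj).preconnected hi (by simp) hadj
  have hTsub : (S ∪ {i, j} : Set (Fin n)) ⊆ {k | 0 ≤ u k} := by
    rintro x (hx | hx)
    · exact hsub hx
    · rcases hx with rfl | rfl
      · exact hsub hi
      · exact hj
  have := hmax _ Set.subset_union_left hTsub hT
  rw [← this]
  exact Or.inr (Or.inr rfl)

lemma domain_eq_of_mem (hS : IsPosWeakNodalDomain G u S) (hT : IsPosWeakNodalDomain G u T)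
    {x : Fin n} (hxS : x ∈ S) (hxT : x ∈ T) : S = T := by
  have hconn : (G.induce (S ∪ T)).Connected :=
    SimpleGraph.induce_union_connected hS.2.2.1.preconnected hT.2.2.1.preconnected ⟨x, hxS, hxT⟩
  have hsub : (S ∪ T) ⊆ {k | 0 ≤ u k} := Set.union_subset hS.1 hT.1
  have h1 := hS.2.2.2 _ Set.subset_union_left hsub hconn
  have h2 := hT.2.2.2 _ Set.subset_union_right hsub hconn
  rw [← h1, h2]

lemma domain_eq_of_adj (hS : IsPosWeakNodalDomain G u S) (hT : IsPosWeakNodalDomain G u T)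
    {i j : Fin n} (hi : i ∈ S) (hj : j ∈ T) (hadj : G.Adj i j) : S = T :=
  domain_eq_of_mem hS hT (domain_absorb hS hi hadj (hT.1 hj)) hj

end Aux

open scoped Classical in
/-- `u` restricted to `S` (zero outside). -/
noncomputable def nodalVec (u : Fin n → ℝ) (S : Set (Fin n)) : Fin n → ℝ :=
  fun k => if k ∈ S then u k else 0

lemma mulVec_sum'' {ι : Type*} [Fintype ι] (A : Matrix (Fin n) (Fin n) ℝ)
    (f : ι → Fin n → ℝ) : A *ᵥ (∑ i, f i) = ∑ i, A *ᵥ f i := by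
  ext k
  simp only [Matrix.mulVec, dotProduct, Finset.sum_apply, Finset.mul_sum]
  exact Finset.sum_comm

lemma dot_sum_right {ι : Type*} [Fintype ι] (a : Fin n → ℝ) (f : ι → Fin n → ℝ) :
    a ⬝ᵥ (∑ i, f i) = ∑ i, a ⬝ᵥ f i := by
  simp only [dotProduct, Finset.sum_apply, Finset.mul_sum]
  exact Finset.sum_comm

lemma sum_dot_left {ι : Type*} [Fintype ι] (a : Fin n → ℝ) (f : ι → Fin n → ℝ) :
    (∑ i, f i) ⬝ᵥ a = ∑ i, f i ⬝ᵥ a := by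
  simp only [dotProduct, Finset.sum_apply, Finset.sum_mul]
  exact Finset.sum_comm

/-- Let `A` be the (possibly weighted, loops allowed) adjacency matrix of a finite
simple connected graph. If `u` has two entries of opposite signs and `Au ≥ λu`
componentwise, then `u` induces at most `ℓ'` positive weak nodal domains, where
`ℓ'` is the number of eigenvalues of `A` strictly greater than `λ`
(with multiplicity). -/
theorem pos_weak_nodal_domains_bound (A : Matrix (Fin n) (Fin n) ℝ)
    (hA : A.IsHermitian) (hnonneg : ∀ i j, 0 ≤ A i j)
    (hconn : (matGraph A).Connected)
    (lam : ℝ) (u : Fin n → ℝ)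
    (hpos : ∃ i, 0 < u i) (hneg : ∃ j, u j < 0)
    (hAu : ∀ i, lam * u i ≤ (A *ᵥ u) i) :
    {S : Set (Fin n) | IsPosWeakNodalDomain (matGraph A) u S}.ncard ≤
      (Finset.univ.filter (fun i => lam < hA.eigenvalues i)).card := by
  classical
  by_contra hlt
  push_neg at hlt
  -- symmetry of A
  have hsymm : ∀ i j, A j i = A i j := fun i j => by
    have := hA.apply i j; simpa using this
  -- the finite collection of domains
  have hfin : {S : Set (Fin n) | IsPosWeakNodalDomain (matGraph A) u S}.Finite :=
    Set.toFinite _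
  set D : Finset (Set (Fin n)) := hfin.toFinset with hDdef
  have hmemD : ∀ {S}, S ∈ D ↔ IsPosWeakNodalDomain (matGraph A) u S := by
    intro S; rw [hDdef, Set.Finite.mem_toFinset]; rfl
  rw [Set.ncard_eq_toFinset_card _ hfin, ← hDdef] at hlt
  -- absorption
  have habs : ∀ {S}, S ∈ D → ∀ {k j}, k ∈ S → A k j ≠ 0 → 0 ≤ u j → j ∈ S := by
    intro S hSD k j hk hAkj huj
    by_cases hkj : k = j
    · exact hkj ▸ hk
    · exact domain_absorb (hmemD.mp hSD) hk (show k ≠ j ∧ (A k j ≠ 0 ∨ A j k ≠ 0) from ⟨hkj, Or.inl hAkj⟩) huj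
  have hdisj : ∀ S T : D, S ≠ T → ∀ k, k ∈ S.1 → k ∈ T.1 → False := by
    intro S T hST k hkS hkT
    exact hST (Subtype.ext (domain_eq_of_mem (hmemD.mp S.2) (hmemD.mp T.2) hkS hkT))
  have hposD : ∀ S : D, ∃ k ∈ S.1, 0 < u k := by
    intro S
    obtain ⟨k, hk, hne⟩ := (hmemD.mp S.2).2.1
    exact ⟨k, hk, lt_of_le_of_ne ((hmemD.mp S.2).1 hk) (Ne.symm hne)⟩
  -- the nodal vectors
  set w : Set (Fin n) → Fin n → ℝ := nodalVec u with hwdef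
  have hw_mem : ∀ S (k : Fin n), k ∈ S → w S k = u k := by
    intro S k hk; simp [hwdef, nodalVec, hk]
  have hw_not_mem : ∀ S (k : Fin n), k ∉ S → w S k = 0 := by
    intro S k hk; simp [hwdef, nodalVec, hk]
  have hindep : LinearIndependent ℝ (fun S : D => w S.1) := by
    rw [Fintype.linearIndependent_iff]
    intro g hg S
    obtain ⟨k, hkS, hku⟩ := hposD S
    have h0 := congrFun hg k
    rw [Finset.sum_apply] at h0
    rw [Finset.sum_eq_single S
      (fun T _ hTS => by
        have hkT : k ∉ T.1 := fun hkT => hdisj T S hTS k hkT hkS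
        simp [hw_not_mem T.1 k hkT])
      (by simp)] at h0
    have h1 : g S * u k = 0 := by
      simpa [hw_mem S.1 k hkS] using h0
    rcases mul_eq_zero.1 h1 with h | h
    · exact h
    · exact absurd h (ne_of_gt hku)
  -- the eigenvector family
  set B := hA.eigenvectorBasis with hBdef
  set μ := hA.eigenvalues with hμdef
  have heig : ∀ i, A *ᵥ ⇑(B i) = μ i • ⇑(B i) := fun i => hA.mulVec_eigenvectorBasis i
  have horth : ∀ i j : Fin n, (⇑(B i) : Fin n → ℝ) ⬝ᵥ ⇑(B j) = if i = j then 1 else 0 := by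
    intro i j
    have h := (orthonormal_iff_ite (𝕜 := ℝ)).mp B.orthonormal i j
    rw [EuclideanSpace.inner_eq_star_dotProduct] at h
    rw [dotProduct_comm]
    simpa using h
  set V : {i : Fin n // μ i ≤ lam} → Fin n → ℝ := fun i => ⇑(B i.1) with hVdef
  have horthV : ∀ i j, V i ⬝ᵥ V j = if i = j then 1 else 0 := by
    intro i j
    rw [hVdef]; rw [horth i.1 j.1]
    by_cases h : i = j
    · simp [h]
    · rw [if_neg h, if_neg (fun hh => h (Subtype.ext hh))]
  have hdotV : ∀ (e f : {i : Fin n // μ i ≤ lam} → ℝ),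
      (∑ i, e i • V i) ⬝ᵥ (∑ i, f i • V i) = ∑ i, e i * f i := by
    intro e f
    rw [sum_dot_left]
    refine Finset.sum_congr rfl fun i _ => ?_
    rw [smul_dotProduct, dot_sum_right]
    have : ∀ j, V i ⬝ᵥ (f j • V j) = if i = j then f j else 0 := by
      intro j
      rw [dotProduct_smul, horthV i j]
      by_cases h : i = j <;> simp [h]
    rw [Finset.sum_congr rfl fun j _ => this j, Finset.sum_ite_eq]
    simp [mul_comm]
  have hVindep : LinearIndependent ℝ V := by
    rw [Fintype.linearIndependent_iff]
    intro g hg i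
    have h0 : V i ⬝ᵥ (∑ j, g j • V j) = g i := by
      rw [dot_sum_right]
      have : ∀ j, V i ⬝ᵥ (g j • V j) = if i = j then g j else 0 := by
        intro j
        rw [dotProduct_smul, horthV i j]
        by_cases h : i = j <;> simp [h]
      rw [Finset.sum_congr rfl fun j _ => this j, Finset.sum_ite_eq]
      simp
    rw [hg] at h0
    simpa using h0.symm
  -- the two subspaces
  set W : Submodule ℝ (Fin n → ℝ) := Submodule.span ℝ (Set.range fun S : D => w S.1) with hWdef
  set E : Submodule ℝ (Fin n → ℝ) := Submodule.span ℝ (Set.range V) with hEdef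
  have hfrW : Module.finrank ℝ W = D.card := by
    rw [hWdef, finrank_span_eq_card hindep, Fintype.card_coe]
  have hfrE : Module.finrank ℝ E = Fintype.card {i : Fin n // μ i ≤ lam} := by
    rw [hEdef, finrank_span_eq_card hVindep]
  have hcardσ : Fintype.card {i : Fin n // μ i ≤ lam}
      + (Finset.univ.filter (fun i => lam < μ i)).card = n := by
    rw [Fintype.card_subtype]
    have : (Finset.univ.filter fun i : Fin n => μ i ≤ lam)
        = Finset.univ.filter (fun i : Fin n => ¬ lam < μ i) := by
      apply Finset.filter_congr; intro i _; simp [hμdef, not_lt]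
    rw [this, add_comm, Finset.card_filter_add_card_filter_not, Finset.card_univ,
      Fintype.card_fin]
  have hWE : W ⊓ E ≠ ⊥ := by
    intro hbot
    have h1 := Submodule.finrank_sup_add_finrank_inf_eq W E
    rw [hbot, finrank_bot, add_zero, hfrW, hfrE] at h1
    have h2 : Module.finrank ℝ ↥(W ⊔ E) ≤ Module.finrank ℝ (Fin n → ℝ) :=
      Submodule.finrank_le _
    have h3 : Module.finrank ℝ (Fin n → ℝ) = n := by
      rw [Module.finrank_pi]; exact Fintype.card_fin n
    omega
  obtain ⟨x, hxmem, hx0⟩ := (Submodule.ne_bot_iff _).mp hWE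
  have hxW : x ∈ W := hxmem.1
  have hxE : x ∈ E := hxmem.2
  rw [hWdef, Submodule.mem_span_range_iff_exists_fun] at hxW
  rw [hEdef, Submodule.mem_span_range_iff_exists_fun] at hxE
  obtain ⟨c, hc⟩ := hxW
  obtain ⟨d, hd⟩ := hxE
  -- pointwise description of x
  have hx_pt : ∀ k, x k = ∑ S : D, c S * w S.1 k := by
    intro k
    rw [← hc, Finset.sum_apply]
    exact Finset.sum_congr rfl fun S _ => rfl
  have hsupp : ∀ k, x k ≠ 0 → ∃ S : D, k ∈ S.1 := by
    intro k hk
    by_contra h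
    push_neg at h
    refine hk ?_
    rw [hx_pt k]
    exact Finset.sum_eq_zero fun S _ => by rw [hw_not_mem S.1 k (h S), mul_zero]
  have hx_on : ∀ (S : D), ∀ k ∈ S.1, x k = c S * u k := by
    intro S k hk
    rw [hx_pt k, Finset.sum_eq_single S
      (fun T _ hTS => by rw [hw_not_mem T.1 k (fun hkT => hdisj T S hTS k hkT hk), mul_zero])
      (by simp), hw_mem S.1 k hk]
  -- elementary mulVec facts
  have hmv : ∀ (v : Fin n → ℝ) k, (A *ᵥ v) k = ∑ j, A k j * v j := fun v k => rfl
  have hsplit : ∀ (S : Set (Fin n)) k, (A *ᵥ u) k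
      = (∑ j, if j ∈ S then A k j * u j else 0) + (∑ j, if j ∈ S then 0 else A k j * u j) := by
    intro S k
    rw [hmv, ← Finset.sum_add_distrib]
    exact Finset.sum_congr rfl fun j _ => by by_cases h : j ∈ S <;> simp [h]
  have hOterm : ∀ (S : D), ∀ k ∈ S.1, ∀ j, (if j ∈ S.1 then 0 else A k j * u j) ≤ 0 := by
    intro S k hk j
    by_cases hj : j ∈ S.1
    · simp [hj]
    · rw [if_neg hj]
      by_cases hAkj : A k j = 0
      · simp [hAkj]
      · have huj : u j ≤ 0 := by
          by_contra h
          push_neg at h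
          exact hj (habs S.2 hk hAkj h.le)
        exact mul_nonpos_of_nonneg_of_nonpos (hnonneg k j) huj
  have hO_nonpos : ∀ (S : D), ∀ k ∈ S.1, (∑ j, if j ∈ S.1 then 0 else A k j * u j) ≤ 0 :=
    fun S k hk => Finset.sum_nonpos fun j _ => hOterm S k hk j
  have hF_ge : ∀ (S : D), ∀ k ∈ S.1,
      lam * u k ≤ ∑ j, if j ∈ S.1 then A k j * u j else 0 := by
    intro S k hk
    have h1 := hAu k
    rw [hsplit S.1 k] at h1
    linarith [hO_nonpos S k hk]
  have hAx_on : ∀ (S : D), ∀ k ∈ S.1,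
      (A *ᵥ x) k = c S * ∑ j, if j ∈ S.1 then A k j * u j else 0 := by
    intro S k hk
    rw [hmv, Finset.mul_sum]
    refine Finset.sum_congr rfl fun j _ => ?_
    by_cases hj : j ∈ S.1
    · rw [if_pos hj, hx_on S j hj]; ring
    · rw [if_neg hj, mul_zero]
      by_cases hxj : x j = 0
      · rw [hxj, mul_zero]
      · obtain ⟨T, hjT⟩ := hsupp j hxj
        have hAkj : A k j = 0 := by
          by_contra hAkj
          have hkj : k ≠ j := fun h => hj (h ▸ hk)
          have hSeqT := domain_eq_of_adj (hmemD.mp S.2) (hmemD.mp T.2) hk hjT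
            (show k ≠ j ∧ (A k j ≠ 0 ∨ A j k ≠ 0) from ⟨hkj, Or.inl hAkj⟩)
          exact hj (hSeqT ▸ hjT)
        rw [hAkj, zero_mul]
  -- the Rayleigh quantity is nonnegative (combinatorial side)
  have hQW : 0 ≤ x ⬝ᵥ (A *ᵥ x - lam • x) := by
    apply Finset.sum_nonneg
    intro k _
    have hsub : (A *ᵥ x - lam • x) k = (A *ᵥ x) k - lam * x k := rfl
    show 0 ≤ x k * (A *ᵥ x - lam • x) k
    rw [hsub]
    by_cases hxk : x k = 0
    · rw [hxk]; simp
    · obtain ⟨S, hkS⟩ := hsupp k hxk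
      have huk : 0 ≤ u k := (hmemD.mp S.2).1 hkS
      have hFk := hF_ge S k hkS
      rw [hx_on S k hkS, hAx_on S k hkS]
      nlinarith [mul_nonneg (mul_nonneg (sq_nonneg (c S)) huk) (sub_nonneg.mpr hFk)]
  -- the Rayleigh quantity is nonpositive (spectral side)
  have hAxform : A *ᵥ x - lam • x = ∑ i, (d i * (μ i.1 - lam)) • V i := by
    rw [← hd, mulVec_sum'', Finset.smul_sum, ← Finset.sum_sub_distrib]
    refine Finset.sum_congr rfl fun i _ => ?_
    rw [Matrix.mulVec_smul]
    simp only [hVdef]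
    rw [heig i.1, smul_smul, smul_smul, ← sub_smul]
    congr 1
    ring
  have hQE : x ⬝ᵥ (A *ᵥ x - lam • x) = ∑ i, d i * (d i * (μ i.1 - lam)) := by
    rw [hAxform, ← hd]
    exact hdotV d _
  have htnp : ∀ i ∈ (Finset.univ : Finset {i : Fin n // μ i ≤ lam}),
      d i * (d i * (μ i.1 - lam)) ≤ 0 := by
    intro i _
    nlinarith [sq_nonneg (d i), sub_nonpos.mpr i.2]
  have hQ0 : ∑ i, d i * (d i * (μ i.1 - lam)) = 0 := by
    have hle := Finset.sum_nonpos htnp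
    have hge : (0:ℝ) ≤ ∑ i, d i * (d i * (μ i.1 - lam)) := by rw [← hQE]; exact hQW
    linarith
  have hterm0 := (Finset.sum_eq_zero_iff_of_nonpos htnp).mp hQ0
  have hcoef : ∀ i, d i * (μ i.1 - lam) = 0 := by
    intro i
    rcases mul_eq_zero.1 (hterm0 i (Finset.mem_univ i)) with h | h
    · rw [h, zero_mul]
    · exact h
  have hAx : A *ᵥ x = lam • x := by
    have h := hAxform
    rw [Finset.sum_eq_zero (fun i _ => by rw [hcoef i, zero_smul])] at h
    exact sub_eq_zero.mp h
  -- extract a domain meeting the support of x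
  obtain ⟨k0, hk0⟩ := Function.ne_iff.mp hx0
  have hk0' : x k0 ≠ 0 := by simpa using hk0
  obtain ⟨S, hk0S⟩ := hsupp k0 hk0'
  have hcS : c S ≠ 0 := fun h => hk0' (by rw [hx_on S k0 hk0S, h, zero_mul])
  have hFeq : ∀ k ∈ S.1, (∑ j, if j ∈ S.1 then A k j * u j else 0) = lam * u k := by
    intro k hk
    have h1 : (A *ᵥ x) k = lam * x k := by rw [hAx]; rfl
    rw [hAx_on S k hk, hx_on S k hk] at h1
    have h2 : c S * (∑ j, if j ∈ S.1 then A k j * u j else 0) = c S * (lam * u k) := by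
      rw [h1]; ring
    exact mul_left_cancel₀ hcS h2
  have hOzero : ∀ k ∈ S.1, (∑ j, if j ∈ S.1 then 0 else A k j * u j) = 0 := by
    intro k hk
    have h := hAu k
    rw [hsplit S.1 k, hFeq k hk] at h
    have := hO_nonpos S k hk
    linarith
  have hnoedge : ∀ k ∈ S.1, ∀ j, j ∉ S.1 → A k j = 0 := by
    intro k hk j hj
    by_contra hAkj
    have huj : u j < 0 := by
      by_contra h
      push_neg at h
      exact hj (habs S.2 hk hAkj h)
    have hterm : A k j * u j < 0 :=
      mul_neg_of_pos_of_neg (lt_of_le_of_ne (hnonneg k j) (Ne.symm hAkj)) huj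
    have hall := (Finset.sum_eq_zero_iff_of_nonpos
      (fun j' _ => hOterm S k hk j')).mp (hOzero k hk) j (Finset.mem_univ j)
    rw [if_neg hj] at hall
    linarith
  -- connectivity contradiction
  obtain ⟨k1, hk1S, -⟩ := hposD S
  obtain ⟨j1, hj1⟩ := hneg
  have hj1S : j1 ∉ S.1 := fun h => absurd ((hmemD.mp S.2).1 h) (not_le.mpr hj1)
  obtain ⟨p⟩ := hconn.preconnected k1 j1
  obtain ⟨dart, -, hdfst, hdsnd⟩ := p.exists_boundary_dart S.1 hk1S hj1S
  obtain ⟨hne, h | h⟩ := dart.adj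
  · exact h (hnoedge _ hdfst _ hdsnd)
  · refine h ?_
    rw [hsymm]
    exact hnoedge _ hdfst _ hdsnd
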